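/- arXiv:1402.5324 — 2 statements merged into one kernel-verified Lean document; each statement's English description precedes it below -/
import Mathlib

section
/- Let U₁ = [(B₁,ρ₁),(B₂,τ)] and U₂ = [(B₁,ρ₂),(B₂,τ)] be infinite matrices built from the same basis pair with two orderings ρ₁, ρ₂ of B₁. If ρ₁ is optimal in lines, meaning μ(π_N U₁) = Θ(f(N)) for some decreasing f : ℕ → ℝ_{>0}, then f(N) = O(μ(R_N U₂)) and μ(R_N U₁) = O(μ(R_N U₂)); i.e., ρ₁ is an optimal ordering. -/
open scoped InnerProductSpace

variable {H : Type*} [NormedAddCommGroup H] [InnerProductSpace ℂ H]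

/-- The line coherence `μ(π_N U)` of `U = [(B₁,ρ),(B₂,τ)]`, `U_{m,n} = ⟨τ(n), ρ(m)⟩`. -/
noncomputable def muPi {B₁ B₂ : Set H} (ρ : ℕ ≃ B₁) (τ : ℕ ≃ B₂) (N : ℕ) : ℝ :=
  ⨆ n : ℕ, ‖(⟪(τ n : H), (ρ N : H)⟫_ℂ : ℂ)‖ ^ 2

/-- The block coherence `μ(R_N U) = sup_{M ≥ N} μ(π_M U)`. -/
noncomputable def muR {B₁ B₂ : Set H} (ρ : ℕ ≃ B₁) (τ : ℕ ≃ B₂) (N : ℕ) : ℝ :=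
  ⨆ M : {M : ℕ // N ≤ M}, muPi ρ τ M

/-- If `ρ₁` is optimal in lines for the basis pair `(B₁, B₂)` — i.e.
`μ(π_N U₁) = Θ(f(N))` for a decreasing positive `f`, where
`U₁ = [(B₁,ρ₁),(B₂,τ)]` — then for any other ordering `ρ₂` of `B₁`, with
`U₂ = [(B₁,ρ₂),(B₂,τ)]`, one has `f(N) = O(μ(R_N U₂))` and
`μ(R_N U₁) = O(μ(R_N U₂))`; i.e. `ρ₁` is an optimal ordering. -/
theorem statement18 {B₁ B₂ : Set H}
    (hB₁ : Orthonormal ℂ ((↑) : B₁ → H)) (hB₂ : Orthonormal ℂ ((↑) : B₂ → H))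
    (ρ₁ ρ₂ : ℕ ≃ B₁) (τ : ℕ ≃ B₂)
    (f : ℕ → ℝ) (hfpos : ∀ N, 0 < f N) (hf : Antitone f)
    (C₁ C₂ : ℝ) (hC₁ : 0 < C₁) (hC₂ : 0 < C₂)
    (hΘ : ∀ N : ℕ, C₁ * f N ≤ muPi ρ₁ τ N ∧ muPi ρ₁ τ N ≤ C₂ * f N) :
    (∃ C : ℝ, 0 < C ∧ ∀ N : ℕ, f N ≤ C * muR ρ₂ τ N) ∧
      (∃ C : ℝ, 0 < C ∧ ∀ N : ℕ, muR ρ₁ τ N ≤ C * muR ρ₂ τ N) := by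

  -- every inner product term is bounded by 1
  have hterm : ∀ (ρ : ℕ ≃ B₁) (M n : ℕ), ‖(⟪(τ n : H), (ρ M : H)⟫_ℂ : ℂ)‖ ^ 2 ≤ 1 := by
    intro ρ M n
    have h1 : ‖(⟪(τ n : H), (ρ M : H)⟫_ℂ : ℂ)‖ ≤ ‖(τ n : H)‖ * ‖(ρ M : H)‖ :=
      norm_inner_le_norm _ _
    rw [hB₂.1 (τ n), hB₁.1 (ρ M), one_mul] at h1
    exact pow_le_one₀ (norm_nonneg _) h1
  have hmuPi_le_one : ∀ (ρ : ℕ ≃ B₁) (M : ℕ), muPi ρ τ M ≤ 1 := by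
    intro ρ M
    exact ciSup_le (fun n => hterm ρ M n)
  have hbdd : ∀ (ρ : ℕ ≃ B₁) (M : ℕ),
      BddAbove (Set.range fun n : ℕ => ‖(⟪(τ n : H), (ρ M : H)⟫_ℂ : ℂ)‖ ^ 2) := by
    intro ρ M
    exact ⟨1, Set.forall_mem_range.2 (fun n => hterm ρ M n)⟩
  have hmuPi_nonneg : ∀ (ρ : ℕ ≃ B₁) (M : ℕ), 0 ≤ muPi ρ τ M := by
    intro ρ M
    exact le_trans (sq_nonneg _) (le_ciSup (hbdd ρ M) 0)
  have hmuPi_congr : ∀ (ρ ρ' : ℕ ≃ B₁) (K M : ℕ), ρ K = ρ' M → muPi ρ τ K = muPi ρ' τ M := by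
    intro ρ ρ' K M h
    unfold muPi
    rw [h]
  have hbddR : ∀ (ρ : ℕ ≃ B₁) (N : ℕ),
      BddAbove (Set.range fun M : {M : ℕ // N ≤ M} => muPi ρ τ M) := by
    intro ρ N
    exact ⟨1, Set.forall_mem_range.2 (fun M => hmuPi_le_one ρ M)⟩
  have hmuR_nonneg : ∀ (ρ : ℕ ≃ B₁) (N : ℕ), 0 ≤ muR ρ τ N := by
    intro ρ N
    exact le_trans (hmuPi_nonneg ρ N) (le_ciSup (hbddR ρ N) ⟨N, le_refl N⟩)
  -- pigeonhole: some ρ₁ K with K ≤ N lands at position ≥ N under ρ₂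
  have pig : ∀ N : ℕ, ∃ K ≤ N, N ≤ ρ₂.symm (ρ₁ K) := by
    intro N
    by_contra h
    push_neg at h
    have hcard : (Finset.range (N + 1)).card ≤ (Finset.range N).card := by
      apply Finset.card_le_card_of_injOn (fun k => ρ₂.symm (ρ₁ k))
      · intro k hk
        simp only [Finset.mem_coe, Finset.mem_range] at hk ⊢
        exact h k (Nat.lt_succ_iff.mp hk)
      · intro a _ b _ hab
        exact ρ₁.injective (ρ₂.symm.injective hab)
    simp at hcard
  -- key: f N ≤ (1/C₁) * muR ρ₂ τ N
  have key : ∀ N : ℕ, C₁ * f N ≤ muR ρ₂ τ N := by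
    intro N
    obtain ⟨K, hKN, hMN⟩ := pig N
    set M : ℕ := ρ₂.symm (ρ₁ K) with hM
    have hρ : ρ₁ K = ρ₂ M := by
      rw [hM, Equiv.apply_symm_apply]
    calc C₁ * f N ≤ C₁ * f K := by
          exact mul_le_mul_of_nonneg_left (hf hKN) hC₁.le
      _ ≤ muPi ρ₁ τ K := (hΘ K).1
      _ = muPi ρ₂ τ M := hmuPi_congr ρ₁ ρ₂ K M hρ
      _ ≤ muR ρ₂ τ N := le_ciSup (hbddR ρ₂ N) ⟨M, hMN⟩
  -- muR ρ₁ τ N ≤ C₂ * f N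
  have key2 : ∀ N : ℕ, muR ρ₁ τ N ≤ C₂ * f N := by
    intro N
    apply ciSup_le
    rintro ⟨M, hMN⟩
    calc muPi ρ₁ τ M ≤ C₂ * f M := (hΘ M).2
      _ ≤ C₂ * f N := mul_le_mul_of_nonneg_left (hf hMN) hC₂.le
  constructor
  · refine ⟨1 / C₁, by positivity, fun N => ?_⟩
    rw [div_mul_eq_mul_div, one_mul, le_div_iff₀ hC₁, mul_comm]
    exact key N
  · refine ⟨C₂ / C₁, by positivity, fun N => ?_⟩
    calc muR ρ₁ τ N ≤ C₂ * f N := key2 N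
      _ ≤ C₂ / C₁ * muR ρ₂ τ N := by
          rw [div_mul_eq_mul_div, le_div_iff₀ hC₁]
          nlinarith [key N, hC₂.le]
end

section
/- Let (B₁, B₂) be a basis pair of a separable Hilbert space and suppose ρ : ℕ → B₁ is a 'best ordering', i.e., N ↦ μ(π_N U) is decreasing where U = [(B₁,ρ),(B₂,τ)]. Then for any other ordering ρ' of B₁ with U' = [(B₁,ρ'),(B₂,τ)], one has μ(R_N U') ≥ μ(R_N U) for all N; in particular ρ ≺ ρ' and every best ordering is optimal. -/
open scoped InnerProductSpace

variable {H : Type*} [NormedAddCommGroup H] [InnerProductSpace ℂ H]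

/-- Each line coherence is at most 1 when both families are normalized. -/
lemma muPi_le_one {B₁ B₂ : Set H}
    (hB₁ : Orthonormal ℂ ((↑) : B₁ → H)) (hB₂ : Orthonormal ℂ ((↑) : B₂ → H))
    (ρ : ℕ ≃ B₁) (τ : ℕ ≃ B₂) (N : ℕ) : muPi ρ τ N ≤ 1 := by
  apply ciSup_le
  intro n
  have h := norm_inner_le_norm (𝕜 := ℂ) ((τ n : H)) ((ρ N : H))
  rw [hB₁.1 (ρ N), hB₂.1 (τ n), one_mul] at h
  calc ‖(⟪(τ n : H), (ρ N : H)⟫_ℂ : ℂ)‖ ^ 2 ≤ 1 ^ 2 := by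
        exact pow_le_pow_left₀ (norm_nonneg _) h 2
    _ = 1 := one_pow 2

/-- If the lines agree as vectors, the line coherences agree. -/
lemma muPi_congr {B₁ B₂ : Set H} (ρ ρ' : ℕ ≃ B₁) (τ : ℕ ≃ B₂) {N M : ℕ}
    (h : (ρ N : H) = (ρ' M : H)) : muPi ρ τ N = muPi ρ' τ M := by
  unfold muPi
  simp [h]

/-- If `ρ` is a best ordering of the basis pair `(B₁, B₂)`, i.e. `N ↦ μ(π_N U)` is
decreasing for `U = [(B₁,ρ),(B₂,τ)]`, then for any other ordering `ρ'` of `B₁`, with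
`U' = [(B₁,ρ'),(B₂,τ)]`, one has `μ(R_N U') ≥ μ(R_N U)` for all `N`; in particular
`ρ ≺ ρ'` (i.e. `μ(R_N U) = O(μ(R_N U'))`), so every best ordering is optimal. -/
theorem statement19 {B₁ B₂ : Set H}
    (hB₁ : Orthonormal ℂ ((↑) : B₁ → H)) (hB₂ : Orthonormal ℂ ((↑) : B₂ → H))
    (ρ ρ' : ℕ ≃ B₁) (τ : ℕ ≃ B₂)
    (hbest : Antitone (fun N : ℕ => muPi ρ τ N)) :
    (∀ N : ℕ, muR ρ τ N ≤ muR ρ' τ N) ∧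
      (∃ C : ℝ, 0 < C ∧ ∀ N : ℕ, muR ρ τ N ≤ C * muR ρ' τ N) := by
  have main : ∀ N : ℕ, muR ρ τ N ≤ muR ρ' τ N := by
    intro N
    -- pigeonhole: some K ≤ N has ρ'-index ≥ N
    obtain ⟨K, hKN, hK⟩ : ∃ K ≤ N, N ≤ ρ'.symm (ρ K) := by
      by_contra hcon
      push_neg at hcon
      have hinj : Function.Injective (fun K : ℕ => ρ'.symm (ρ K)) := by
        intro a b hab
        simpa using ρ.injective (ρ'.symm.injective hab)
      have hsub : (Finset.range (N + 1)).image (fun K => ρ'.symm (ρ K)) ⊆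
          Finset.range N := by
        intro x hx
        simp only [Finset.mem_image, Finset.mem_range] at hx ⊢
        obtain ⟨K, hK1, rfl⟩ := hx
        exact hcon K (Nat.lt_succ_iff.mp hK1)
      have hcard := Finset.card_le_card hsub
      rw [Finset.card_image_of_injective _ hinj, Finset.card_range,
        Finset.card_range] at hcard
      omega
    -- muR ρ τ N ≤ muPi ρ τ K
    have h1 : muR ρ τ N ≤ muPi ρ τ K := by
      apply ciSup_le
      rintro ⟨M, hM⟩
      exact hbest (le_trans hKN hM)
    -- muPi ρ τ K = muPi ρ' τ (ρ'.symm (ρ K)) ≤ muR ρ' τ N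
    have h2 : muPi ρ τ K ≤ muR ρ' τ N := by
      have heq : muPi ρ τ K = muPi ρ' τ (ρ'.symm (ρ K)) :=
        muPi_congr ρ ρ' τ (by rw [Equiv.apply_symm_apply])
      rw [heq]
      have hbdd : BddAbove (Set.range fun M : {M : ℕ // N ≤ M} => muPi ρ' τ M) := by
        refine ⟨1, ?_⟩
        rintro x ⟨M, rfl⟩
        exact muPi_le_one hB₁ hB₂ ρ' τ M
      exact le_ciSup hbdd ⟨ρ'.symm (ρ K), hK⟩
    exact h1.trans h2
  refine ⟨main, 1, one_pos, fun N => by simpa using main N⟩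
end
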